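/- Let η = x₀dx₁ − x₁dx₀ + x₂dx₃ − x₃dx₂ on ℂ⁴ and let S = {f = 0} ⊂ ℂ⁴ be given by a homogeneous polynomial f. If the restriction of η to the tangent spaces of the smooth locus of {f = 0} vanishes identically (i.e. {f=0} is invariant and η|_S = 0 as a form), and f is irreducible of degree ≥ 2, then a contradiction follows; concretely: there is no irreducible homogeneous polynomial f of degree ≥ 2 such that η ∧ df is divisible by f. -/

import Mathlib

open MvPolynomial

abbrev PolyC (m : ℕ) := MvPolynomial (Fin m) ℂ

/-- The contact form η = x₀dx₁ − x₁dx₀ + x₂dx₃ − x₃dx₂ on ℂ⁴. -/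
noncomputable def ηc : Fin 4 → PolyC 4 := ![-X 1, X 0, -X 3, X 2]

private lemma degree_univ (d : Fin 4 →₀ ℕ) : d.degree = ∑ i : Fin 4, d i :=
  Finset.sum_subset (Finset.subset_univ _) (fun _ _ hi => Finsupp.notMem_support_iff.mp hi)

private lemma degree_add' (a b : Fin 4 →₀ ℕ) : (a + b).degree = a.degree + b.degree := by
  simp only [degree_univ, Finsupp.add_apply, Finset.sum_add_distrib]

private lemma degree_single' (i : Fin 4) : (Finsupp.single i 1).degree = 1 := by
  simp [degree_univ, Finsupp.single_apply]

private lemma deg_key (i j : Fin 4) (d : Fin 4 →₀ ℕ) (h : d j ≠ 0) :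
    (Finsupp.single i 1 + (d - Finsupp.single j 1)).degree = d.degree := by
  have hle : Finsupp.single j 1 ≤ d := by
    rw [Finsupp.single_le_iff]; omega
  have h2 : (d - Finsupp.single j 1) + Finsupp.single j 1 = d := tsub_add_cancel_of_le hle
  have h3 := congrArg Finsupp.degree h2
  rw [degree_add', degree_single'] at h3 ⊢
  omega

private lemma X_mul_pderiv_monomial (i j : Fin 4) (d : Fin 4 →₀ ℕ) (c : ℂ) :
    X i * pderiv j (monomial d c) =
      monomial (Finsupp.single i 1 + (d - Finsupp.single j 1)) (c * d j) := by
  rw [pderiv_monomial, X, monomial_mul, one_mul]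

private lemma isHomog_X_mul_pderiv {f : PolyC 4} {k : ℕ} (hf : f.IsHomogeneous k)
    (i j : Fin 4) : (X i * pderiv j f : PolyC 4).IsHomogeneous k := by
  conv_lhs => rw [← support_sum_monomial_coeff f]
  rw [map_sum, Finset.mul_sum]
  apply IsHomogeneous.sum
  intro d hd
  rw [X_mul_pderiv_monomial]
  by_cases hdj : d j = 0
  · rw [hdj]
    simp only [Nat.cast_zero, mul_zero, monomial_zero]
    exact isHomogeneous_zero _ _ _
  · apply isHomogeneous_monomial
    rw [deg_key i j d hdj, Finsupp.degree_eq_weight_one]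
    exact hf (mem_support_iff.mp hd)

private lemma nihsEuler {f : PolyC 4} {k : ℕ} (hf : f.IsHomogeneous k) :
    ∑ j : Fin 4, X j * pderiv j f = C (k : ℂ) * f := by
  have lhs_eq : ∑ j : Fin 4, X j * pderiv j f =
      ∑ d ∈ f.support, ∑ j : Fin 4, X j * pderiv j (monomial d (coeff d f)) := by
    rw [Finset.sum_comm]
    apply Finset.sum_congr rfl
    intro j _
    conv_lhs => rw [← support_sum_monomial_coeff f]
    rw [map_sum, Finset.mul_sum]
  rw [lhs_eq]
  conv_rhs => rw [← support_sum_monomial_coeff f, Finset.mul_sum]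
  apply Finset.sum_congr rfl
  intro d hd
  have hdeg : d.degree = k := by
    rw [Finsupp.degree_eq_weight_one]
    exact hf (mem_support_iff.mp hd)
  have step1 : ∀ j : Fin 4, X j * pderiv j (monomial d (coeff d f)) =
      monomial d (coeff d f * d j) := by
    intro j
    rw [X_mul_pderiv_monomial]
    by_cases hdj : d j = 0
    · rw [hdj]; simp
    · have hle : Finsupp.single j 1 ≤ d := by
        rw [Finsupp.single_le_iff]; omega
      rw [add_comm, tsub_add_cancel_of_le hle]
  calc ∑ j : Fin 4, X j * pderiv j (monomial d (coeff d f))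
      = ∑ j : Fin 4, monomial d (coeff d f * d j) := Finset.sum_congr rfl fun j _ => step1 j
    _ = monomial d (coeff d f * ∑ j : Fin 4, (d j : ℂ)) := by
        rw [Finset.mul_sum, ← map_sum]
    _ = C (k : ℂ) * monomial d (coeff d f) := by
        rw [C_mul_monomial]
        congr 1
        rw [mul_comm]
        congr 1
        rw [← Nat.cast_sum, ← degree_univ, hdeg]

private lemma nihsExistsConst {f p : PolyC 4} {k : ℕ} (hf : f.IsHomogeneous k) (hf0 : f ≠ 0)
    (hp : p.IsHomogeneous k) (hdvd : f ∣ p) : ∃ c : ℂ, p = C c * f := by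
  obtain ⟨q, rfl⟩ := hdvd
  rcases eq_or_ne q 0 with rfl | hq0
  · exact ⟨0, by simp⟩
  set N := q.totalDegree with hN
  rcases Nat.eq_zero_or_pos N with hN0 | hN1
  · have hq : q.IsHomogeneous 0 := isHomogeneous_of_totalDegree_zero _ (hN.symm.trans hN0)
    have h1 := homogeneousComponent_of_mem (mem_homogeneousSubmodule 0 q |>.mpr hq)
      (m := 0)
    rw [if_pos rfl] at h1
    have hqC : q = C (coeff 0 q) := by
      conv_lhs => rw [← h1]
      exact homogeneousComponent_zero q
    refine ⟨coeff 0 q, ?_⟩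
    rw [mul_comm f q, ← hqC]
  · exfalso
    obtain ⟨d, hd, hdN⟩ := Finset.exists_mem_eq_sup q.support
      (support_nonempty.mpr hq0) (fun s => s.sum fun _ e => e)
    have hdeg : d.degree = N := by
      rw [hN, totalDegree, hdN]; rfl
    have hqN : homogeneousComponent N q ≠ 0 := by
      intro h0
      have hc : coeff d (homogeneousComponent N q) = coeff d q := by
        rw [coeff_homogeneousComponent, if_pos hdeg]
      rw [h0, coeff_zero] at hc
      exact (mem_support_iff.mp hd) hc.symm
    have key : homogeneousComponent (k + N) (f * q) = f * homogeneousComponent N q := by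
      have expand : homogeneousComponent (k + N) (f * q) =
          ∑ n ∈ Finset.range (N + 1),
            homogeneousComponent (k + N) (f * homogeneousComponent n q) := by
        conv_lhs => rw [← sum_homogeneousComponent q, Finset.mul_sum]
        rw [map_sum]
      rw [expand, Finset.sum_eq_single N]
      · have := homogeneousComponent_of_mem
          ((mem_homogeneousSubmodule _ _).mpr
            (hf.mul (homogeneousComponent_isHomogeneous N q))) (m := k + N)
        rw [if_pos rfl] at this
        exact this
      · intro n _ hne
        have := homogeneousComponent_of_mem
          ((mem_homogeneousSubmodule _ _).mpr
            (hf.mul (homogeneousComponent_isHomogeneous n q))) (m := k + N)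
        rw [if_neg (by omega)] at this
        exact this
      · intro hNn
        exact absurd (Finset.self_mem_range_succ N) hNn
    have zero : homogeneousComponent (k + N) (f * q) = 0 := by
      have := homogeneousComponent_of_mem
        ((mem_homogeneousSubmodule _ _).mpr hp) (m := k + N)
      rw [if_neg (by omega)] at this
      exact this
    rw [zero] at key
    exact hqN ((mul_eq_zero.mp key.symm).resolve_left hf0)

/-- There is no irreducible homogeneous polynomial f of degree ≥ 2 on ℂ⁴ such that f
divides all the coefficients of the 2-form η ∧ df (i.e. no smooth hypersurface of
degree ≥ 2 is invariant by the contact form η). -/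
theorem no_invariant_hypersurface_of_contact_form
    (f : PolyC 4) (k : ℕ) (hirr : Irreducible f) (hhom : f.IsHomogeneous k)
    (hk : 2 ≤ k) :
    ¬ (∀ i j, f ∣ (ηc i * pderiv j f - ηc j * pderiv i f)) := by
  intro h
  have hf0 : f ≠ 0 := hirr.ne_zero
  have hη0 : ηc 0 = -X 1 := rfl
  have hη1 : ηc 1 = X 0 := rfl
  have hη2 : ηc 2 = -X 3 := rfl
  have hη3 : ηc 3 = X 2 := rfl
  have hom_eta : ∀ i j : Fin 4,
      (ηc i * pderiv j f - ηc j * pderiv i f).IsHomogeneous k := by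
    have H : ∀ a b : Fin 4, (ηc a * pderiv b f).IsHomogeneous k := by
      intro a b
      fin_cases a
      · show ((-X 1 : PolyC 4) * pderiv b f).IsHomogeneous k
        rw [neg_mul]; exact (isHomog_X_mul_pderiv hhom _ _).neg
      · show ((X 0 : PolyC 4) * pderiv b f).IsHomogeneous k
        exact isHomog_X_mul_pderiv hhom _ _
      · show ((-X 3 : PolyC 4) * pderiv b f).IsHomogeneous k
        rw [neg_mul]; exact (isHomog_X_mul_pderiv hhom _ _).neg
      · show ((X 2 : PolyC 4) * pderiv b f).IsHomogeneous k
        exact isHomog_X_mul_pderiv hhom _ _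
    exact fun i j => (H i j).sub (H j i)
  have heu : X 0 * pderiv 0 f + X 1 * pderiv 1 f + X 2 * pderiv 2 f + X 3 * pderiv 3 f
      = C (k : ℂ) * f := by
    have := nihsEuler hhom
    rwa [Fin.sum_univ_four] at this
  obtain ⟨e, he'⟩ := nihsExistsConst hhom hf0 (hom_eta 1 0) (h 1 0)
  have he : X 0 * pderiv 0 f + X 1 * pderiv 1 f = C e * f := by
    rw [hη0, hη1] at he'; linear_combination he'
  obtain ⟨a, ha'⟩ := nihsExistsConst hhom hf0 (hom_eta 0 2) (h 0 2)
  have ha : X 3 * pderiv 0 f - X 1 * pderiv 2 f = C a * f := by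
    rw [hη0, hη2] at ha'; linear_combination ha'
  obtain ⟨b, hb'⟩ := nihsExistsConst hhom hf0 (hom_eta 0 3) (h 0 3)
  have hb : -(X 1 * pderiv 3 f) - X 2 * pderiv 0 f = C b * f := by
    rw [hη0, hη3] at hb'; linear_combination hb'
  obtain ⟨c, hc'⟩ := nihsExistsConst hhom hf0 (hom_eta 1 2) (h 1 2)
  have hc : X 0 * pderiv 2 f + X 3 * pderiv 1 f = C c * f := by
    rw [hη1, hη2] at hc'; linear_combination hc'
  have hQ1 : (-(C b) * X 3 - C a * X 2 : PolyC 4) = (C (k : ℂ) - C e) * X 1 :=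
    mul_right_cancel₀ hf0 (by
      linear_combination (X 3 : PolyC 4) * hb + (X 2 : PolyC 4) * ha +
        (X 1 : PolyC 4) * heu - (X 1 : PolyC 4) * he)
  have hQ2 : (C a * X 0 + C c * X 1 : PolyC 4) = C e * X 3 :=
    mul_right_cancel₀ hf0 (by
      linear_combination (-(X 0) : PolyC 4) * ha + (-(X 1) : PolyC 4) * hc +
        (X 3 : PolyC 4) * he)
  have e0 : e = 0 := by
    have h3 := congrArg (coeff (Finsupp.single 3 1)) hQ2
    rw [coeff_add, coeff_C_mul, coeff_C_mul, coeff_C_mul, coeff_X', coeff_X', coeff_X',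
      if_neg (by simp [Finsupp.single_eq_single_iff]),
      if_neg (by simp [Finsupp.single_eq_single_iff]), if_pos rfl] at h3
    linear_combination -h3
  have ke : (k : ℂ) - e = 0 := by
    rw [← C_sub] at hQ1
    have h1 := congrArg (coeff (Finsupp.single 1 1)) hQ1
    rw [coeff_sub, neg_mul, coeff_neg, coeff_C_mul, coeff_C_mul, coeff_C_mul,
      coeff_X', coeff_X', coeff_X',
      if_neg (by simp [Finsupp.single_eq_single_iff]),
      if_neg (by simp [Finsupp.single_eq_single_iff]), if_pos rfl] at h1
    linear_combination -h1
  rw [e0, sub_zero] at ke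
  have : k = 0 := Nat.cast_eq_zero.mp ke
  omega
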